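/- Let v : (0,∞) → ℝ solve v' = (1+v²)(c₀√(1+v²) - c - v/r) with -cot α ≤ v(r) ≤ 0 for all r > 0 and v decreasing, where c > c₀ > 0 and cot α = √((c/c₀)²-1). Then v(r) → -cot α as r → ∞. -/

import Mathlib

open Filter Set

/-- If `v` solves `v' = (1+v²)(c₀√(1+v²) - c - v/r)` on `(0,∞)`, is decreasing and
satisfies `-cot α ≤ v ≤ 0`, then `v(r) → -cot α` as `r → ∞`. -/
theorem stmt_14 (c c₀ cot : ℝ) (hc₀ : 0 < c₀) (hc : c₀ < c)
    (hcot : cot = Real.sqrt ((c / c₀) ^ 2 - 1))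
    (v : ℝ → ℝ)
    (hode : ∀ r, 0 < r → HasDerivAt v
      ((1 + v r ^ 2) * (c₀ * Real.sqrt (1 + v r ^ 2) - c - v r / r)) r)
    (hbound : ∀ r, 0 < r → -cot ≤ v r ∧ v r ≤ 0)
    (hanti : AntitoneOn v (Set.Ioi 0)) :
    Filter.Tendsto v Filter.atTop (nhds (-cot)) := by
  have hdiv : 1 < c / c₀ := (one_lt_div hc₀).mpr hc
  have hcot0 : 0 < cot := by
    rw [hcot]; apply Real.sqrt_pos.mpr; nlinarith
  have hcotsq : cot ^ 2 = (c / c₀) ^ 2 - 1 := by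
    rw [hcot, Real.sq_sqrt]; nlinarith
  -- the limit exists by monotone convergence
  set g : ℝ → ℝ := fun r => v (max r 1) with hg
  have hmem : ∀ r : ℝ, max r 1 ∈ Set.Ioi (0:ℝ) := fun r =>
    lt_of_lt_of_le one_pos (le_max_right r 1)
  have hganti : Antitone g := fun a b hab =>
    hanti (hmem a) (hmem b) (max_le_max hab le_rfl)
  have hgbdd : BddBelow (Set.range g) := by
    refine ⟨-cot, ?_⟩
    rintro x ⟨r, rfl⟩
    exact (hbound _ (hmem r)).1
  set l := ⨅ r, g r with hl
  have htg : Tendsto g atTop (nhds l) := tendsto_atTop_ciInf hganti hgbdd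
  have heq : g =ᶠ[atTop] v := by
    filter_upwards [eventually_ge_atTop (1:ℝ)] with r hr
    simp [hg, max_eq_left hr]
  have hlv : Tendsto v atTop (nhds l) := htg.congr' heq
  have hl_le : ∀ r : ℝ, 0 < r → l ≤ v r := by
    intro r hr
    refine le_of_tendsto hlv ?_
    filter_upwards [eventually_ge_atTop r, eventually_ge_atTop (1:ℝ)] with s hs hs1
    exact hanti hr (Set.mem_Ioi.mpr (by linarith)) hs
  have hl_ge : -cot ≤ l := by
    refine ge_of_tendsto hlv ?_
    filter_upwards [eventually_ge_atTop (1:ℝ)] with r hr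
    exact (hbound r (by linarith)).1
  have hl0 : l ≤ 0 := by
    refine le_of_tendsto hlv ?_
    filter_upwards [eventually_ge_atTop (1:ℝ)] with r hr
    exact (hbound r (by linarith)).2
  -- it suffices to show l = -cot
  rcases eq_or_lt_of_le hl_ge with h | h
  · rwa [← h] at hlv
  -- suppose -cot < l; derive a contradiction
  exfalso
  set ε := (c - c₀ * Real.sqrt (1 + l ^ 2)) / 2 with hε_def
  have hsl : Real.sqrt (1 + l ^ 2) < c / c₀ := by
    have hl2 : l ^ 2 < cot ^ 2 := by nlinarith
    have : Real.sqrt (1 + l ^ 2) < Real.sqrt (1 + cot ^ 2) := by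
      apply Real.sqrt_lt_sqrt (by positivity); linarith
    calc Real.sqrt (1 + l ^ 2) < Real.sqrt (1 + cot ^ 2) := this
      _ = c / c₀ := by
          rw [show 1 + cot ^ 2 = (c / c₀) ^ 2 by linarith [hcotsq]]
          exact Real.sqrt_sq (by positivity)
  have hε : 0 < ε := by
    have : c₀ * Real.sqrt (1 + l ^ 2) < c₀ * (c / c₀) :=
      mul_lt_mul_of_pos_left hsl hc₀
    have h2 : c₀ * (c / c₀) = c := by field_simp
    rw [hε_def]; linarith
  set R := max 1 (cot / ε) with hR
  have hR1 : (1:ℝ) ≤ R := le_max_left _ _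
  -- derivative bound on [R, ∞)
  have hkey : ∀ r, R ≤ r →
      (1 + v r ^ 2) * (c₀ * Real.sqrt (1 + v r ^ 2) - c - v r / r) ≤ -ε := by
    intro r hr
    have hr0 : 0 < r := by linarith
    obtain ⟨hb1, hb2⟩ := hbound r hr0
    have hlvr : l ≤ v r := hl_le r hr0
    have hv2 : v r ^ 2 ≤ l ^ 2 := by
      nlinarith [mul_nonneg (by linarith : (0:ℝ) ≤ v r - l) (by linarith : (0:ℝ) ≤ -l - v r)]
    have hsq : c₀ * Real.sqrt (1 + v r ^ 2) ≤ c₀ * Real.sqrt (1 + l ^ 2) := by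
      apply mul_le_mul_of_nonneg_left _ hc₀.le
      apply Real.sqrt_le_sqrt; linarith
    have hc2e : c₀ * Real.sqrt (1 + l ^ 2) = c - 2 * ε := by rw [hε_def]; ring
    have hdr : - (v r / r) ≤ ε := by
      have h1 : -v r ≤ cot := by linarith
      have h2 : cot / ε ≤ r := le_trans (le_max_right _ _) hr
      have h3 : cot ≤ ε * r := by
        rw [div_le_iff₀ hε] at h2; linarith
      have : -v r / r ≤ ε := by
        rw [div_le_iff₀ hr0]; linarith
      linarith [this, neg_div r (v r)]
    have hX : c₀ * Real.sqrt (1 + v r ^ 2) - c - v r / r ≤ -ε := by linarith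
    have h1v : (1:ℝ) ≤ 1 + v r ^ 2 := by nlinarith [sq_nonneg (v r)]
    nlinarith [mul_le_mul_of_nonneg_left hX (by linarith : (0:ℝ) ≤ 1 + v r ^ 2),
      sq_nonneg (v r)]
  -- the function v + ε·id is antitone on [R, ∞)
  set h2 : ℝ → ℝ := fun r => v r + ε * r with hh2
  have hderiv : ∀ x, 0 < x → HasDerivAt h2
      ((1 + v x ^ 2) * (c₀ * Real.sqrt (1 + v x ^ 2) - c - v x / x) + ε) x := by
    intro x hx
    exact ((hode x hx).add ((hasDerivAt_id x).const_mul ε)).congr_deriv (by ring)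
  have hantiH : AntitoneOn h2 (Set.Ici R) := by
    apply antitoneOn_of_deriv_nonpos (convex_Ici R)
    · intro x hx
      exact ((hderiv x (by simp at hx; linarith)).differentiableAt.continuousAt).continuousWithinAt
    · intro x hx
      rw [interior_Ici] at hx
      exact ((hderiv x (by simp at hx; linarith)).differentiableAt).differentiableWithinAt
    · intro x hx
      rw [interior_Ici] at hx
      have hx0 : 0 < x := by simp at hx; linarith
      rw [(hderiv x hx0).deriv]
      have := hkey x (le_of_lt hx)
      linarith
  -- evaluate at a far point to get a contradiction
  have hvR := hbound R (by linarith)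
  set N := R + (v R + cot) / ε + 1 with hN
  have hRN : R ≤ N := by
    have h0 : 0 ≤ (v R + cot) / ε := div_nonneg (by linarith [hvR.1]) hε.le
    rw [hN]; linarith
  have hle : h2 N ≤ h2 R := hantiH (Set.self_mem_Ici) hRN hRN
  have hεN : ε * N - ε * R = v R + cot + ε := by
    rw [hN]; field_simp; ring
  have hvN : v N ≤ -cot - ε := by
    have : v N + ε * N ≤ v R + ε * R := hle
    linarith
  have := (hbound N (by linarith)).1
  linarith
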